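/- Let S be a poset such that for every x ∈ S the set {x' ∈ S | x' ≤ x} is a finite chain. Then λ : S → ℕ defined by λ(x) = card{x' ∈ S | x' ≤ x} is a length function, and the induced chain length function λ* is equivalent to λ, i.e., λ(x) ≤ λ(y) iff λ*(x) ≤ λ*(y) for all x, y ∈ S. -/
import Mathlib

def lexLE {T : Type*} [PartialOrder T] [DecidableEq T] (X Y : Finset T) : Prop :=
  X \ Y = ∅ ∨ ∃ b ∈ Y \ X, ∀ a ∈ X \ Y, b ≤ a

def IsLengthFunction {S T : Type*} [PartialOrder S] [PartialOrder T] (l : S → T) : Prop :=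
  (∀ x y : S, x < y → l x < l y) ∧
  (∀ x y : S, l x ≤ l y ∨ l y ≤ l x) ∧
  (∀ x : S, {t : T | ∃ x' ≤ x, l x' = t}.Finite)

def IsChainLengthFunction {S T : Type*} [PartialOrder S] [PartialOrder T] [DecidableEq T]
    (l : S → T) (lstar : S → Finset T) : Prop :=
  ∀ x : S,
    (∃ X : Finset S, IsChain (· ≤ ·) (X : Set S) ∧ x ∈ X ∧ (∀ a ∈ X, a ≤ x) ∧
      lstar x = X.image l) ∧
    (∀ X : Finset S, IsChain (· ≤ ·) (X : Set S) → x ∈ X → (∀ a ∈ X, a ≤ x) →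
      lexLE (X.image l) (lstar x))


section Aux
variable {S : Type*} [PartialOrder S]
  (h : ∀ x : S, {x' : S | x' ≤ x}.Finite ∧ IsChain (· ≤ ·) {x' : S | x' ≤ x})

noncomputable def lam (x : S) : ℕ := Nat.card {x' : S // x' ≤ x}

lemma lam_eq_ncard (x : S) : lam x = Set.ncard {x' : S | x' ≤ x} :=
  (Nat.card_coe_set_eq _).symm ▸ rfl

include h

lemma lam_mono {x y : S} (hxy : x < y) : lam x < lam y := by
  rw [lam_eq_ncard, lam_eq_ncard]
  apply Set.ncard_lt_ncard _ (h y).1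
  constructor
  · exact fun a ha => le_trans ha hxy.le
  · intro hc
    exact absurd (hc (le_refl y)) (not_le_of_gt hxy)

lemma lam_le {x y : S} (hxy : x ≤ y) : lam x ≤ lam y := by
  rw [lam_eq_ncard, lam_eq_ncard]
  exact Set.ncard_le_ncard (fun a ha => le_trans ha hxy) (h y).1

lemma lam_pos (x : S) : 1 ≤ lam x := by
  rw [lam_eq_ncard]
  exact (Set.ncard_pos (h x).1).mpr ⟨x, le_refl x⟩

lemma image_full_chain (x : S) :
    ((h x).1.toFinset).image (lam : S → ℕ) = Finset.Icc 1 (lam x) := by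
  apply Finset.eq_of_subset_of_card_le
  · intro t ht
    simp only [Finset.mem_image, Set.Finite.mem_toFinset, Set.mem_setOf_eq] at ht
    obtain ⟨a, ha, rfl⟩ := ht
    exact Finset.mem_Icc.mpr ⟨lam_pos h a, lam_le h ha⟩
  · rw [Nat.card_Icc]
    rw [Finset.card_image_of_injOn]
    · rw [← Set.ncard_eq_toFinset_card _ (h x).1, ← lam_eq_ncard]
      omega
    · intro a ha b hb hab
      simp only [Finset.mem_coe, Set.Finite.mem_toFinset, Set.mem_setOf_eq] at ha hb
      rcases eq_or_ne a b with rfl | hne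
      · rfl
      · rcases (h x).2 ha hb hne with hle | hle
        · exact absurd hab (Nat.ne_of_lt (lam_mono h (lt_of_le_of_ne hle hne)))
        · exact absurd hab.symm (Nat.ne_of_lt (lam_mono h (lt_of_le_of_ne hle hne.symm)))

lemma lstar_eq {lstar : S → Finset ℕ}
    (hls : IsChainLengthFunction (fun x : S => Nat.card {x' : S // x' ≤ x}) lstar)
    (x : S) : lstar x = Finset.Icc 1 (lam x) := by
  have hsub : lstar x ⊆ Finset.Icc 1 (lam x) := by
    obtain ⟨X, hXc, hxX, hXle, hXeq⟩ := (hls x).1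
    rw [hXeq]
    intro t ht
    simp only [Finset.mem_image] at ht
    obtain ⟨a, ha, rfl⟩ := ht
    exact Finset.mem_Icc.mpr ⟨lam_pos h a, lam_le h (hXle a ha)⟩
  have hlex : lexLE (((h x).1.toFinset).image
      (fun x : S => Nat.card {x' : S // x' ≤ x})) (lstar x) := by
    apply (hls x).2
    · intro a ha b hb hne
      simp only [Finset.coe_sort_coe, Set.Finite.coe_toFinset] at ha hb
      exact (h x).2 ha hb hne
    · exact (h x).1.mem_toFinset.mpr (le_refl x)
    · intro a ha
      simpa [Set.Finite.mem_toFinset] using ha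
  have himg : ((h x).1.toFinset).image (fun x : S => Nat.card {x' : S // x' ≤ x})
      = Finset.Icc 1 (lam x) := image_full_chain h x
  rw [himg] at hlex
  rcases hlex with h1 | ⟨b, hb, _⟩
  · have : Finset.Icc 1 (lam x) ⊆ lstar x := by
      intro t ht
      by_contra hc
      exact absurd (Finset.eq_empty_iff_forall_notMem.mp h1 t
        (Finset.mem_sdiff.mpr ⟨ht, hc⟩)) (fun q => q)
    exact Finset.Subset.antisymm hsub this
  · exact absurd (hsub (Finset.mem_sdiff.mp hb).1) (Finset.mem_sdiff.mp hb).2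

end Aux

theorem card_le_isLengthFunction_and_equiv {S : Type*} [PartialOrder S]
    (h : ∀ x : S, {x' : S | x' ≤ x}.Finite ∧ IsChain (· ≤ ·) {x' : S | x' ≤ x}) :
    IsLengthFunction (fun x : S => Nat.card {x' : S // x' ≤ x}) ∧
    (∀ lstar : S → Finset ℕ,
      IsChainLengthFunction (fun x : S => Nat.card {x' : S // x' ≤ x}) lstar →
      ∀ x y : S,
        (Nat.card {x' : S // x' ≤ x} ≤ Nat.card {x' : S // x' ≤ y} ↔
          lexLE (lstar x) (lstar y))) := by
  constructor
  · refine ⟨fun x y hxy => lam_mono h hxy, fun x y => le_total _ _, fun x => ?_⟩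
    have : {t : ℕ | ∃ x' ≤ x, Nat.card {x'' : S // x'' ≤ x'} = t}
        = (fun x : S => Nat.card {x' : S // x' ≤ x}) '' {x' : S | x' ≤ x} := by
      ext t; simp [Set.mem_image, eq_comm]
    rw [this]
    exact (h x).1.image _
  · intro lstar hls x y
    rw [lstar_eq h hls x, lstar_eq h hls y]
    change lam x ≤ lam y ↔ _
    constructor
    · intro hxy
      left
      rw [Finset.sdiff_eq_empty_iff_subset]
      exact Finset.Icc_subset_Icc_right hxy
    · rintro (h1 | ⟨b, hb, hball⟩)
      · have := Finset.sdiff_eq_empty_iff_subset.mp h1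
          (Finset.mem_Icc.mpr ⟨lam_pos h x, le_refl _⟩)
        exact (Finset.mem_Icc.mp this).2
      · simp only [Finset.mem_sdiff, Finset.mem_Icc, not_and, not_le] at hb
        by_contra hc
        push_neg at hc
        have hx : lam x ∈ Finset.Icc 1 (lam x) \ Finset.Icc 1 (lam y) := by
          simp only [Finset.mem_sdiff, Finset.mem_Icc, not_and, not_le]
          exact ⟨⟨lam_pos h x, le_refl _⟩, fun _ => hc⟩
        have := hball _ hx
        have hbx := hb.2 hb.1.1
        omega
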